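/- arXiv:2211.14008 — 3 statements merged into one kernel-verified Lean document; each statement's English description precedes it below -/
import Mathlib

section
/- Let X = ℝ^n (or ℂ^n) with the ℓ_∞ norm, and Y = ker f where f(x) = x_1 + … + x_n. Then λ(Y, X) = 2 − 2/n, and the projection P_0(x) = x − f(x)·u with u = (1/n, …, 1/n) is a minimal projection onto Y. -/
open Metric Module

noncomputable section

variable {𝕜 : Type*} [RCLike 𝕜] {X : Type*} [NormedAddCommGroup X] [NormedSpace 𝕜 X]

def IsProjOnto (Y : Submodule 𝕜 X) (P : X →L[𝕜] X) : Prop :=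
  (∀ x, P x ∈ Y) ∧ ∀ y ∈ Y, P y = y

def relProjConst (Y : Submodule 𝕜 X) : ℝ :=
  sInf {c | ∃ P : X →L[𝕜] X, IsProjOnto Y P ∧ ‖P‖ = c}

def MinProjSet (Y : Submodule 𝕜 X) : Set (X →L[𝕜] X) :=
  {P | IsProjOnto Y P ∧ ‖P‖ = relProjConst Y}

lemma aux_apply_le {n : ℕ} (x : PiLp ⊤ fun _ : Fin n => 𝕜) (i : Fin n) : ‖x i‖ ≤ ‖x‖ := by
  rw [PiLp.norm_eq_ciSup]
  exact le_ciSup (f := fun i => ‖x i‖) (Set.Finite.bddAbove (Set.finite_range _)) i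

lemma aux_norm_le {n : ℕ} (x : PiLp ⊤ fun _ : Fin n => 𝕜) (C : ℝ) (hC : 0 ≤ C)
    (h : ∀ i, ‖x i‖ ≤ C) : ‖x‖ ≤ C := by
  rw [PiLp.norm_eq_ciSup]
  exact Real.iSup_le h hC

def uconj (a : 𝕜) : 𝕜 := if a = 0 then 0 else (starRingEnd 𝕜) a / (‖a‖ : 𝕜)

lemma uconj_norm_le (a : 𝕜) : ‖uconj a‖ ≤ 1 := by
  unfold uconj
  by_cases h : a = 0
  · simp [h]
  · have : ‖a‖ ≠ 0 := norm_ne_zero_iff.mpr h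
    rw [if_neg h, norm_div, RCLike.norm_conj, RCLike.norm_ofReal, abs_of_nonneg (norm_nonneg a),
      div_self this]

lemma mul_uconj (a : 𝕜) : a * uconj a = ((‖a‖ : ℝ) : 𝕜) := by
  unfold uconj
  by_cases h : a = 0
  · simp [h]
  · have h0 : ((‖a‖:ℝ) : 𝕜) ≠ 0 := by
      simpa using norm_ne_zero_iff.mpr h
    rw [if_neg h, mul_div_assoc', RCLike.mul_conj, sq, mul_div_assoc, div_self h0, mul_one]

lemma proj_lower_bound {n : ℕ} (hn : 1 ≤ n)
    (Y : Submodule 𝕜 (PiLp ⊤ fun _ : Fin n => 𝕜))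
    (hY : ∀ x : PiLp ⊤ fun _ : Fin n => 𝕜, x ∈ Y ↔ ∑ i, x i = 0)
    (P : (PiLp ⊤ fun _ : Fin n => 𝕜) →L[𝕜] (PiLp ⊤ fun _ : Fin n => 𝕜))
    (hP : IsProjOnto Y P) : 2 - 2 / (n : ℝ) ≤ ‖P‖ := by
  obtain ⟨hmem, hfix⟩ := hP
  have hnR : (0:ℝ) < n := by exact_mod_cast Nat.lt_of_lt_of_le Nat.zero_lt_one hn
  set i0 : Fin n := ⟨0, hn⟩ with hi0
  set v : PiLp ⊤ fun _ : Fin n => 𝕜 := WithLp.toLp ⊤ (Pi.single i0 (1:𝕜)) with hv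
  set w : PiLp ⊤ fun _ : Fin n => 𝕜 := v - P v with hwdef
  have hsumv : ∑ j, v j = 1 := by simp [hv]
  have hsumPv : ∑ j, P v j = 0 := (hY _).mp (hmem v)
  have hsumw : ∑ j, w j = 1 := by
    simp only [hwdef, PiLp.sub_apply, Finset.sum_sub_distrib, hsumv, hsumPv, sub_zero]
  have hPx : ∀ x : PiLp ⊤ fun _ : Fin n => 𝕜, P x = x - (∑ j, x j) • w := by
    intro x
    have hy : x - (∑ j, x j) • v ∈ Y := by
      rw [hY]
      simp only [PiLp.sub_apply, PiLp.smul_apply, smul_eq_mul, Finset.sum_sub_distrib,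
        ← Finset.mul_sum, hsumv, mul_one, sub_self]
    have h1 := hfix _ hy
    rw [map_sub, map_smul] at h1
    have h2 : P x = x - (∑ j, x j) • v + (∑ j, x j) • P v := by rw [← h1]; abel
    rw [hwdef, smul_sub, h2]; abel
  have hPxi : ∀ (x : PiLp ⊤ fun _ : Fin n => 𝕜) (i : Fin n),
      P x i = x i - (∑ j, x j) * w i := by
    intro x i
    rw [hPx x]
    simp [PiLp.sub_apply, PiLp.smul_apply, smul_eq_mul]
  -- row bound
  have hrow : ∀ i : Fin n, ‖(1:𝕜) - w i‖ + ((n:ℝ) - 1) * ‖w i‖ ≤ ‖P‖ := by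
    intro i
    let x : PiLp ⊤ fun _ : Fin n => 𝕜 :=
      WithLp.toLp ⊤ (fun j => if j = i then uconj (1 - w i) else uconj (-w i))
    have hxapp : ∀ j, x j = if j = i then uconj (1 - w i) else uconj (-w i) := fun j => rfl
    have hxle : ‖x‖ ≤ 1 := by
      apply aux_norm_le _ _ zero_le_one
      intro j
      rw [hxapp j]
      split_ifs <;> exact uconj_norm_le _
    have hsx : ∑ j, x j = uconj (1 - w i) + ((n:𝕜) - 1) * uconj (-w i) := by
      have herase : ∑ j ∈ Finset.univ.erase i, x j + x i = ∑ j, x j :=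
        Finset.sum_erase_add _ _ (Finset.mem_univ i)
      have hxi : x i = uconj (1 - w i) := by rw [hxapp]; exact if_pos rfl
      have hconst : ∑ j ∈ Finset.univ.erase i, x j
          = ((n - 1 : ℕ) : 𝕜) * uconj (-w i) := by
        rw [Finset.sum_congr rfl (fun j hj => ?_), Finset.sum_const,
          Finset.card_erase_of_mem (Finset.mem_univ i), Finset.card_univ, Fintype.card_fin,
          nsmul_eq_mul]
        rw [hxapp j]
        exact if_neg (Finset.ne_of_mem_erase hj)
      rw [← herase, hxi, hconst, Nat.cast_sub hn]
      push_cast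
      ring
    have key : P x i = (((‖(1:𝕜) - w i‖ + ((n:ℝ) - 1) * ‖w i‖ : ℝ)) : 𝕜) := by
      have e1 := mul_uconj ((1:𝕜) - w i)
      have e2 := mul_uconj (-w i)
      rw [norm_neg] at e2
      rw [hPxi x i, hsx]
      have hxi : x i = uconj (1 - w i) := by rw [hxapp]; exact if_pos rfl
      rw [hxi]
      push_cast
      linear_combination e1 + ((n:𝕜) - 1) * e2
    have hge0 : 0 ≤ ‖(1:𝕜) - w i‖ + ((n:ℝ) - 1) * ‖w i‖ := by
      have : (0:ℝ) ≤ (n:ℝ) - 1 := by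
        have : (1:ℝ) ≤ n := by exact_mod_cast hn
        linarith
      positivity
    calc ‖(1:𝕜) - w i‖ + ((n:ℝ) - 1) * ‖w i‖
        = ‖P x i‖ := by rw [key, RCLike.norm_ofReal, abs_of_nonneg hge0]
      _ ≤ ‖P x‖ := aux_apply_le _ i
      _ ≤ ‖P‖ * ‖x‖ := P.le_opNorm x
      _ ≤ ‖P‖ * 1 := by
          exact mul_le_mul_of_nonneg_left hxle (norm_nonneg P)
      _ = ‖P‖ := mul_one _
  have hsum1 : (n:ℝ) - 1 ≤ ∑ i, ‖(1:𝕜) - w i‖ := by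
    have h1 : ∑ i, ((1:𝕜) - w i) = (n:𝕜) - 1 := by
      rw [Finset.sum_sub_distrib, hsumw]
      simp
    calc (n:ℝ) - 1 = ‖((n:𝕜) - 1)‖ := by
          rw [show ((n:𝕜) - 1) = (((n:ℝ) - 1 : ℝ) : 𝕜) by push_cast; ring,
            RCLike.norm_ofReal, abs_of_nonneg (by
              have : (1:ℝ) ≤ n := by exact_mod_cast hn
              linarith)]
      _ = ‖∑ i, ((1:𝕜) - w i)‖ := by rw [h1]
      _ ≤ ∑ i, ‖(1:𝕜) - w i‖ := norm_sum_le _ _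
  have hsum2 : (1:ℝ) ≤ ∑ i, ‖w i‖ := by
    calc (1:ℝ) = ‖(1:𝕜)‖ := by simp
      _ = ‖∑ i, w i‖ := by rw [hsumw]
      _ ≤ ∑ i, ‖w i‖ := norm_sum_le _ _
  have htot : ∑ i : Fin n, (‖(1:𝕜) - w i‖ + ((n:ℝ) - 1) * ‖w i‖) ≤ (n:ℝ) * ‖P‖ := by
    calc ∑ i : Fin n, (‖(1:𝕜) - w i‖ + ((n:ℝ) - 1) * ‖w i‖)
        ≤ ∑ _i : Fin n, ‖P‖ := Finset.sum_le_sum (fun i _ => hrow i)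
      _ = (n:ℝ) * ‖P‖ := by
          rw [Finset.sum_const, Finset.card_univ, Fintype.card_fin, nsmul_eq_mul]
  have hexpand : ∑ i : Fin n, (‖(1:𝕜) - w i‖ + ((n:ℝ) - 1) * ‖w i‖)
      = (∑ i, ‖(1:𝕜) - w i‖) + ((n:ℝ) - 1) * ∑ i, ‖w i‖ := by
    rw [Finset.sum_add_distrib, ← Finset.mul_sum]
  have hfinal : 2 * (n:ℝ) - 2 ≤ (n:ℝ) * ‖P‖ := by
    rw [hexpand] at htot
    have hge1 : (0:ℝ) ≤ (n:ℝ) - 1 := by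
      have : (1:ℝ) ≤ n := by exact_mod_cast hn
      linarith
    nlinarith [hsum1, hsum2, htot]
  have h2 : (2 : ℝ) / n * n = 2 := div_mul_cancel₀ _ hnR.ne'
  rw [← sub_nonneg]
  have : (‖P‖ - (2 - 2/(n:ℝ))) * n = (n:ℝ) * ‖P‖ - (2 * n - 2) := by
    field_simp
  nlinarith [hfinal]

/-- For `X = 𝕜ⁿ` with the sup norm (`𝕜 = ℝ` or `ℂ`) and the hyperplane
`Y = ker (x ↦ x₁ + ⋯ + x_n)`, one has `λ(Y, X) = 2 - 2/n`, and the projection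
`P₀ x = x - (∑ x_j) • (1/n, …, 1/n)` is a minimal projection onto `Y`. -/
theorem linf_hyperplane_projConst {n : ℕ} (hn : 1 ≤ n)
    (Y : Submodule 𝕜 (PiLp ⊤ fun _ : Fin n => 𝕜))
    (hY : ∀ x : PiLp ⊤ fun _ : Fin n => 𝕜, x ∈ Y ↔ ∑ i, x i = 0)
    (P₀ : (PiLp ⊤ fun _ : Fin n => 𝕜) →L[𝕜] (PiLp ⊤ fun _ : Fin n => 𝕜))
    (hP₀ : ∀ (x : PiLp ⊤ fun _ : Fin n => 𝕜) (i : Fin n),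
      P₀ x i = x i - (∑ j, x j) / (n : 𝕜)) :
    relProjConst Y = 2 - 2 / (n : ℝ) ∧ P₀ ∈ MinProjSet Y := by
  have hnR : (0:ℝ) < n := by exact_mod_cast Nat.lt_of_lt_of_le Nat.zero_lt_one hn
  have hnK : (n:𝕜) ≠ 0 := Nat.cast_ne_zero.mpr (by omega)
  -- P₀ is a projection onto Y
  have hproj : IsProjOnto Y P₀ := by
    constructor
    · intro x
      rw [hY]
      have : ∑ i : Fin n, P₀ x i = ∑ i : Fin n, (x i - (∑ j, x j) / (n:𝕜)) :=
        Finset.sum_congr rfl (fun i _ => hP₀ x i)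
      rw [this, Finset.sum_sub_distrib, Finset.sum_const, Finset.card_univ, Fintype.card_fin,
        nsmul_eq_mul]
      field_simp
      simp
    · intro y hy
      have hs : ∑ j, y j = 0 := (hY y).mp hy
      ext i
      rw [hP₀ y i, hs]
      simp
  -- norm bound above
  have hC : (0:ℝ) ≤ 2 - 2 / n := by
    have h2 : (2:ℝ)/n ≤ 2 := by
      rw [div_le_iff₀ hnR]
      nlinarith [show (1:ℝ) ≤ n from by exact_mod_cast hn]
    linarith
  have hub : ‖P₀‖ ≤ 2 - 2 / (n:ℝ) := by
    apply ContinuousLinearMap.opNorm_le_bound _ (by positivity)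
    intro x
    apply aux_norm_le _ _ (by positivity)
    intro i
    rw [hP₀ x i]
    have hrw : x i - (∑ j, x j) / (n:𝕜) = (∑ j, (x i - x j)) / (n:𝕜) := by
      rw [Finset.sum_sub_distrib, Finset.sum_const, Finset.card_univ, Fintype.card_fin,
        nsmul_eq_mul]
      field_simp
    rw [hrw, norm_div, RCLike.norm_natCast]
    have hzero : ‖x i - x i‖ = 0 := by simp
    have herase : ∑ j ∈ Finset.univ.erase i, ‖x i - x j‖ + ‖x i - x i‖
        = ∑ j, ‖x i - x j‖ := Finset.sum_erase_add _ _ (Finset.mem_univ i)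
    have hbound : ‖∑ j, (x i - x j)‖ ≤ ((n - 1 : ℕ) : ℝ) * (2 * ‖x‖) := by
      calc ‖∑ j, (x i - x j)‖ ≤ ∑ j, ‖x i - x j‖ := norm_sum_le _ _
        _ = ∑ j ∈ Finset.univ.erase i, ‖x i - x j‖ := by rw [← herase, hzero, add_zero]
        _ ≤ (Finset.univ.erase i).card • (2 * ‖x‖) := by
            apply Finset.sum_le_card_nsmul
            intro j _
            calc ‖x i - x j‖ ≤ ‖x i‖ + ‖x j‖ := norm_sub_le _ _
              _ ≤ ‖x‖ + ‖x‖ := add_le_add (aux_apply_le x i) (aux_apply_le x j)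
              _ = 2 * ‖x‖ := by ring
        _ = ((n - 1 : ℕ) : ℝ) * (2 * ‖x‖) := by
            rw [Finset.card_erase_of_mem (Finset.mem_univ i), Finset.card_univ, Fintype.card_fin,
              nsmul_eq_mul]
    rw [div_le_iff₀ hnR]
    have hcast : ((n - 1 : ℕ) : ℝ) = (n:ℝ) - 1 := by
      rw [Nat.cast_sub hn]; norm_num
    rw [hcast] at hbound
    have h2 : (2:ℝ)/n * n = 2 := div_mul_cancel₀ _ hnR.ne'
    nlinarith [norm_nonneg x, hnR]
  have hlb := proj_lower_bound hn Y hY P₀ hproj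
  have hnorm : ‖P₀‖ = 2 - 2 / (n:ℝ) := le_antisymm hub hlb
  have hmemS : (2 - 2 / (n:ℝ)) ∈ {c | ∃ P : (PiLp ⊤ fun _ : Fin n => 𝕜) →L[𝕜]
      (PiLp ⊤ fun _ : Fin n => 𝕜), IsProjOnto Y P ∧ ‖P‖ = c} := ⟨P₀, hproj, hnorm⟩
  have hlbS : ∀ c ∈ {c | ∃ P : (PiLp ⊤ fun _ : Fin n => 𝕜) →L[𝕜]
      (PiLp ⊤ fun _ : Fin n => 𝕜), IsProjOnto Y P ∧ ‖P‖ = c}, 2 - 2 / (n:ℝ) ≤ c := by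
    rintro c ⟨P, hP, rfl⟩
    exact proj_lower_bound hn Y hY P hP
  have hInf : relProjConst Y = 2 - 2 / (n:ℝ) := by
    unfold relProjConst
    exact le_antisymm (csInf_le ⟨2 - 2 / (n:ℝ), hlbS⟩ hmemS) (le_csInf ⟨_, hmemS⟩ hlbS)
  exact ⟨hInf, hproj, by rw [hnorm, hInf]⟩
end
end

section
/- Let X be an n-dimensional normed space over ℝ or ℂ and Y ⊆ X a subspace with λ(Y,X) > 1. If T = Σ_{i=1}^l α_i x_i ⊗ f_i is a Chalmers–Metcalf operator for Y, then dim span{f_1|_Y, …, f_l|_Y} (in Y*) is strictly smaller than dim span{f_1, …, f_l} (in X*). -/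
open Metric Module

noncomputable section

variable {𝕜 : Type*} [RCLike 𝕜] {X : Type*} [NormedAddCommGroup X] [NormedSpace 𝕜 X]
  [NormedSpace ℝ X] [IsScalarTower ℝ 𝕜 X]

/-- `∑ i, α i • (x i ⊗ f i)` is a Chalmers–Metcalf operator for `Y`. -/
def IsCM (Y : Submodule 𝕜 X) {l : ℕ} (α : Fin l → ℝ) (x : Fin l → X)
    (f : Fin l → (X →L[𝕜] 𝕜)) : Prop :=
  (∀ i, 0 < α i) ∧ ∑ i, α i = 1 ∧
  (∀ i, x i ∈ Set.extremePoints ℝ (closedBall (0 : X) 1)) ∧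
  (∀ i, f i ∈ Set.extremePoints ℝ (closedBall (0 : X →L[𝕜] 𝕜) 1)) ∧
  (∀ y ∈ Y, (∑ i, α i • (f i y • x i)) ∈ Y) ∧
  ∃ P₀ ∈ MinProjSet Y, ∀ i, f i (P₀ (x i)) = (relProjConst Y : 𝕜)

set_option maxHeartbeats 1000000 in
set_option synthInstance.maxHeartbeats 200000 in
/-- If `λ(Y, X) > 1` and `T = ∑ αᵢ xᵢ ⊗ fᵢ` is a Chalmers–Metcalf operator for `Y`,
then `dim span {f₁|_Y, …, f_l|_Y} < dim span {f₁, …, f_l}`. -/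
theorem cm_restriction_span_lt [FiniteDimensional 𝕜 X] (Y : Submodule 𝕜 X)
    (hlam : 1 < relProjConst Y) {l : ℕ} (α : Fin l → ℝ) (x : Fin l → X)
    (f : Fin l → (X →L[𝕜] 𝕜)) (hCM : IsCM Y α x f) :
    finrank 𝕜 ↥(Submodule.span 𝕜
        (Set.range fun i => (f i).toLinearMap.domRestrict Y)) <
      finrank 𝕜 ↥(Submodule.span 𝕜 (Set.range f)) := by
  obtain ⟨hα, hαsum, hx, hf, hTY, P₀, ⟨⟨hPmem, hPfix⟩, hPnorm⟩, hfP⟩ := hCM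
  by_contra hcon
  push_neg at hcon
  set R : (X →L[𝕜] 𝕜) →ₗ[𝕜] (↥Y →ₗ[𝕜] 𝕜) :=
    (LinearMap.domRestrict' Y).comp (ContinuousLinearMap.coeLM 𝕜) with hRdef
  set S : Submodule 𝕜 (X →L[𝕜] 𝕜) := Submodule.span 𝕜 (Set.range f) with hSdef
  have hrange : (Set.range fun i => (f i).toLinearMap.domRestrict Y) = R '' Set.range f := by
    rw [← Set.range_comp]; rfl
  have hmap : Submodule.span 𝕜 (Set.range fun i => (f i).toLinearMap.domRestrict Y)
      = S.map R := by rw [hrange, Submodule.span_image]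
  rw [hmap] at hcon
  have hle : finrank 𝕜 ↥(S.map R) ≤ finrank 𝕜 ↥S := Submodule.finrank_map_le R S
  have heq : finrank 𝕜 ↥(S.map R) = finrank 𝕜 ↥S := le_antisymm hle hcon
  have hdis : Disjoint S (LinearMap.ker R) :=
    Submodule.disjoint_ker_of_finrank_le (L := S) R heq.ge
  have hker : ∀ g : X →L[𝕜] 𝕜, g ∈ S → R g = 0 → g = 0 := by
    intro g hg hg0
    have : g ∈ (⊥ : Submodule 𝕜 (X →L[𝕜] 𝕜)) :=
      hdis.le_bot ⟨hg, by simpa [LinearMap.mem_ker] using hg0⟩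
    simpa using this
  -- key identity
  have key : ∀ g : X →ₗ[𝕜] 𝕜, (∀ y ∈ Y, g y = 0) →
      ∀ z : X, ∑ i, (α i : 𝕜) * g (x i) * f i z = 0 := by
    intro g hg z
    set φ : X →L[𝕜] 𝕜 := ∑ i, ((α i : 𝕜) * g (x i)) • f i with hφdef
    have hφS : φ ∈ S := Submodule.sum_mem _ fun i _ =>
      Submodule.smul_mem _ _ (Submodule.subset_span ⟨i, rfl⟩)
    have hφ0 : R φ = 0 := by
      ext y
      have hTy := hg _ (hTY y y.2)
      have hexp : (g (∑ i, α i • (f i (y : X) • x i)) : 𝕜)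
          = ∑ i, (α i : 𝕜) * g (x i) * f i (y : X) := by
        rw [map_sum]
        refine Finset.sum_congr rfl fun i _ => ?_
        rw [RCLike.real_smul_eq_coe_smul (K := 𝕜), map_smul, map_smul]
        simp only [smul_eq_mul]; ring
      rw [hexp] at hTy
      simpa [hRdef, hφdef, mul_comm, mul_left_comm] using hTy
    have hz := hker φ hφS hφ0
    have hz2 := congrArg (fun ψ : X →L[𝕜] 𝕜 => ψ z) hz
    simpa [hφdef] using hz2
  -- diagonal identity via a basis
  have b := Module.finBasis 𝕜 X
  have hdiag : ∑ i, (α i : 𝕜) * f i (x i - P₀ (x i)) = 0 := by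
    have hk : ∀ k, ∑ i, (α i : 𝕜) *
        ((b.coord k).comp ((LinearMap.id : X →ₗ[𝕜] X) - P₀.toLinearMap)) (x i) * f i (b k) = 0 :=
      fun k => key _ (fun y hy => by
        simp [LinearMap.comp_apply, LinearMap.sub_apply, hPfix y hy]) (b k)
    calc ∑ i, (α i : 𝕜) * f i (x i - P₀ (x i))
        = ∑ i, (α i : 𝕜) * f i (∑ k, b.repr (x i - P₀ (x i)) k • b k) := by
          refine Finset.sum_congr rfl fun i _ => ?_; rw [b.sum_repr]
      _ = ∑ i, ∑ k, (α i : 𝕜) * (b.repr (x i - P₀ (x i)) k * f i (b k)) := by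
          refine Finset.sum_congr rfl fun i _ => ?_
          rw [map_sum, Finset.mul_sum]
          refine Finset.sum_congr rfl fun k _ => ?_
          rw [map_smul]; simp [smul_eq_mul]
      _ = ∑ k, ∑ i, (α i : 𝕜) * (b.repr (x i - P₀ (x i)) k * f i (b k)) := Finset.sum_comm
      _ = 0 := by
          refine Finset.sum_eq_zero fun k _ => ?_
          have hkk := hk k
          simpa [LinearMap.comp_apply, Basis.coord_apply, mul_assoc] using hkk
  have hmain : ((relProjConst Y : ℝ) : 𝕜) = ∑ i, (α i : 𝕜) * f i (x i) := by
    have h1 : ∑ i, (α i : 𝕜) * f i (x i) = ∑ i, (α i : 𝕜) * f i (P₀ (x i)) := by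
      have h2 : ∑ i, ((α i : 𝕜) * f i (x i) - (α i : 𝕜) * f i (P₀ (x i))) = 0 := by
        rw [← hdiag]
        refine Finset.sum_congr rfl fun i _ => ?_
        rw [map_sub]; ring
      rw [Finset.sum_sub_distrib] at h2
      linear_combination h2
    rw [h1]
    have h3 : ∑ i, (α i : 𝕜) * f i (P₀ (x i)) = ∑ i, (α i : 𝕜) * (relProjConst Y : 𝕜) := by
      refine Finset.sum_congr rfl fun i _ => ?_; rw [hfP i]
    rw [h3, ← Finset.sum_mul]
    have h4 : ∑ i, (α i : 𝕜) = 1 := by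
      rw [← RCLike.ofReal_sum, hαsum, RCLike.ofReal_one]
    rw [h4, one_mul]
  -- contradiction with hlam
  have hre : relProjConst Y = ∑ i, α i * RCLike.re (f i (x i)) := by
    have := congrArg (RCLike.re (K := 𝕜)) hmain
    simpa [map_sum, RCLike.re_ofReal_mul] using this
  have hbound : ∀ i, α i * RCLike.re (f i (x i)) ≤ α i := by
    intro i
    have hxle : ‖x i‖ ≤ 1 := by
      have := (hx i).1
      rwa [mem_closedBall_zero_iff] at this
    have hfle : ‖f i‖ ≤ 1 := by
      have := (hf i).1
      rwa [mem_closedBall_zero_iff] at this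
    have h5 : RCLike.re (f i (x i)) ≤ 1 := by
      calc RCLike.re (f i (x i)) ≤ ‖f i (x i)‖ := RCLike.re_le_norm _
        _ ≤ ‖f i‖ * ‖x i‖ := (f i).le_opNorm _
        _ ≤ 1 := by nlinarith [norm_nonneg (f i), norm_nonneg (x i)]
    nlinarith [(hα i).le]
  have : relProjConst Y ≤ 1 := by
    rw [hre, ← hαsum]
    exact Finset.sum_le_sum fun i _ => hbound i
  linarith
end
end

section
/- Let X be an n-dimensional normed space over ℝ or ℂ with n ≥ 2, and Y = ker f a hyperplane with λ(Y,X) > 1. Suppose T = Σ_{i=1}^l α_i x_i ⊗ f_i is a Chalmers–Metcalf operator for Y such that no nonzero y ∈ Y satisfies f_i(y) = 0 for all 1 ≤ i ≤ l. Then the minimal projection from X onto Y is unique. -/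
open Metric Module

noncomputable section

variable {𝕜 : Type*} [RCLike 𝕜] {X : Type*} [NormedAddCommGroup X] [NormedSpace 𝕜 X]
  [NormedSpace ℝ X] [IsScalarTower ℝ 𝕜 X]

/-- Let `Y = ker F` be a hyperplane of the `n`-dimensional space `X` (over `ℝ` or `ℂ`)
with `λ(Y, X) > 1`. If a Chalmers–Metcalf operator `∑ αᵢ xᵢ ⊗ fᵢ` for `Y` is such that
no nonzero `y ∈ Y` satisfies `fᵢ y = 0` for all `i`, then the minimal projection onto
`Y` is unique. -/
theorem hyperplane_unique_minProj_of_cm [FiniteDimensional 𝕜 X] {n : ℕ}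
    (hn : finrank 𝕜 X = n) (h2 : 2 ≤ n)
    (F : X →L[𝕜] 𝕜) (hF : F ≠ 0) (Y : Submodule 𝕜 X) (hY : Y = LinearMap.ker (F : X →ₗ[𝕜] 𝕜))
    (hlam : 1 < relProjConst Y)
    {l : ℕ} (α : Fin l → ℝ) (x : Fin l → X) (f : Fin l → (X →L[𝕜] 𝕜))
    (hCM : IsCM Y α x f)
    (hker : ∀ y ∈ Y, (∀ i, f i y = 0) → y = 0) :
    ∃! P : X →L[𝕜] X, P ∈ MinProjSet Y := by
  classical
  obtain ⟨hα, hαsum, hx, hf, hT, P₀, hP₀, hnorm⟩ := hCM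
  set lam := relProjConst Y with hlamdef
  have hlam0 : (0:ℝ) < lam := lt_trans one_pos hlam
  have hxle : ∀ i, ‖x i‖ ≤ 1 := fun i => mem_closedBall_zero_iff.mp (hx i).1
  have hfle : ∀ i, ‖f i‖ ≤ 1 := fun i => mem_closedBall_zero_iff.mp (hf i).1
  obtain ⟨x₁, hx₁⟩ : ∃ x₁, F x₁ ≠ 0 := by
    by_contra h; push_neg at h
    exact hF (ContinuousLinearMap.ext fun z => by simp [h z])
  set x₀ := (F x₁)⁻¹ • x₁ with hx₀def
  have hFx₀ : F x₀ = 1 := by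
    simp [hx₀def, inv_mul_cancel₀ hx₁]
  -- difference of two projections onto Y is rank one through F
  have hDgen : ∀ P Q : X →L[𝕜] X, IsProjOnto Y P → IsProjOnto Y Q →
      ∀ z, P z - Q z = F z • (P x₀ - Q x₀) := by
    intro P Q hP hQ z
    have hz : z - F z • x₀ ∈ Y := by
      rw [hY]; simp [LinearMap.mem_ker, map_sub, map_smul, hFx₀]
    have h1 : P z - F z • P x₀ = z - F z • x₀ := by
      have := hP.2 _ hz; rwa [map_sub, map_smul] at this
    have h2 : Q z - F z • Q x₀ = z - F z • x₀ := by
      have := hQ.2 _ hz; rwa [map_sub, map_smul] at this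
    rw [smul_sub]
    exact sub_eq_sub_iff_sub_eq_sub.mp (h1.trans h2.symm)
  -- key: every minimal projection P satisfies f i (P (x i)) = lam
  have key : ∀ P, P ∈ MinProjSet Y → ∀ i, f i (P (x i)) = (lam : 𝕜) := by
    intro P hP
    set v := P x₀ - P₀ x₀ with hvdef
    have hvY : v ∈ Y := Y.sub_mem (hP.1.1 x₀) (hP₀.1.1 x₀)
    have hFTv : ∑ i, α i • (f i v * F (x i)) = 0 := by
      have h0 : F (∑ i, α i • (f i v • x i)) = 0 := by
        have := hT v hvY; rw [hY] at this; exact this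
      rw [map_sum] at h0
      simpa [map_smul] using h0
    have hsplit : ∀ i, f i (P (x i)) = f i (P₀ (x i)) + F (x i) * f i v := by
      intro i
      have h1 : f i (P (x i)) - f i (P₀ (x i)) = F (x i) * f i v := by
        rw [← map_sub, hDgen P P₀ hP.1 hP₀.1 (x i), map_smul, smul_eq_mul]
      linear_combination h1
    have hsum : ∑ i, α i • f i (P (x i)) = (lam : 𝕜) := by
      have : ∑ i, α i • f i (P (x i))
          = ∑ i, α i • f i (P₀ (x i)) + ∑ i, α i • (f i v * F (x i)) := by
        rw [← Finset.sum_add_distrib]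
        refine Finset.sum_congr rfl fun i _ => ?_
        rw [hsplit i, smul_add, mul_comm]
      rw [this, hFTv, add_zero]
      have h2 : ∑ i, α i • f i (P₀ (x i)) = ∑ i, α i • (lam : 𝕜) := by
        refine Finset.sum_congr rfl fun i _ => by rw [hnorm i]
      rw [h2, ← Finset.sum_smul, hαsum, one_smul]
    have hz : ∀ j, ‖f j (P (x j))‖ ≤ lam := by
      intro j
      calc ‖f j (P (x j))‖ ≤ ‖f j‖ * ‖P (x j)‖ := (f j).le_opNorm _
        _ ≤ 1 * (‖P‖ * ‖x j‖) := by
            have := (P).le_opNorm (x j)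
            have h1 := hfle j
            have h2 : (0:ℝ) ≤ ‖P (x j)‖ := norm_nonneg _
            nlinarith [norm_nonneg (f j)]
        _ ≤ 1 * (lam * 1) := by
            rw [hP.2]
            have := hxle j
            nlinarith [hlam0.le]
        _ = lam := by ring
    have hre : ∀ j, RCLike.re (f j (P (x j))) ≤ lam :=
      fun j => (RCLike.re_le_norm _).trans (hz j)
    have hresum : ∑ j, α j * RCLike.re (f j (P (x j))) = lam := by
      have h0 := congrArg RCLike.re hsum
      rw [map_sum] at h0
      simpa [RCLike.smul_re] using h0
    have hzero : ∀ j, α j * (lam - RCLike.re (f j (P (x j)))) = 0 := by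
      have hsum0 : ∑ j, α j * (lam - RCLike.re (f j (P (x j)))) = 0 := by
        have : ∑ j, α j * (lam - RCLike.re (f j (P (x j))))
            = (∑ j, α j) * lam - ∑ j, α j * RCLike.re (f j (P (x j))) := by
          rw [Finset.sum_mul, ← Finset.sum_sub_distrib]
          exact Finset.sum_congr rfl fun j _ => by ring
        rw [this, hαsum, hresum, one_mul, sub_self]
      intro j
      exact (Finset.sum_eq_zero_iff_of_nonneg
        (fun j _ => mul_nonneg (hα j).le (sub_nonneg.mpr (hre j)))).mp
        hsum0 j (Finset.mem_univ j)
    intro i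
    have hrei : RCLike.re (f i (P (x i))) = lam := by
      have h0 := hzero i
      have := (hα i).ne'
      rcases mul_eq_zero.mp h0 with h | h
      · exact absurd h this
      · linarith [sub_eq_zero.mp h]
    have himi : RCLike.im (f i (P (x i))) = 0 := by
      have h1 : ‖f i (P (x i))‖ ^ 2 ≤ lam ^ 2 := by
        have := hz i
        nlinarith [norm_nonneg (f i (P (x i)))]
      have h2 : ‖f i (P (x i))‖ ^ 2
          = RCLike.re (f i (P (x i))) * RCLike.re (f i (P (x i)))
            + RCLike.im (f i (P (x i))) * RCLike.im (f i (P (x i))) :=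
        RCLike.norm_sq_eq_def
      nlinarith [sq_nonneg (RCLike.im (f i (P (x i))))]
    apply RCLike.ext
    · simp [hrei]
    · simp [himi]
  refine ⟨P₀, hP₀, fun P hP => ?_⟩
  set v := P x₀ - P₀ x₀ with hvdef
  have hvY : v ∈ Y := Y.sub_mem (hP.1.1 x₀) (hP₀.1.1 x₀)
  have hfv : ∀ i, f i v = 0 := by
    intro i
    have hFxi : F (x i) ≠ 0 := by
      intro h0
      have hxiY : x i ∈ Y := by rw [hY]; exact h0
      have heq : f i (x i) = (lam : 𝕜) := by
        have := hnorm i; rwa [hP₀.1.2 _ hxiY] at this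
      have hb : ‖f i (x i)‖ ≤ 1 := by
        calc ‖f i (x i)‖ ≤ ‖f i‖ * ‖x i‖ := (f i).le_opNorm _
          _ ≤ 1 := by nlinarith [hfle i, hxle i, norm_nonneg (f i), norm_nonneg (x i)]
      rw [heq] at hb
      rw [RCLike.norm_ofReal, abs_of_pos hlam0] at hb
      linarith
    have h0 : f i (P (x i)) - f i (P₀ (x i)) = F (x i) * f i v := by
      rw [← map_sub, hDgen P P₀ hP.1 hP₀.1 (x i), map_smul, smul_eq_mul]
    rw [key P hP i, hnorm i, sub_self] at h0
    exact (mul_eq_zero.mp h0.symm).resolve_left hFxi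
  have hv0 : v = 0 := hker v hvY hfv
  ext z
  have hd := hDgen P P₀ hP.1 hP₀.1 z
  rw [← hvdef, hv0, smul_zero] at hd
  exact sub_eq_zero.mp hd
end
end
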